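/- arXiv:1611.08761 — 2 statements merged into one kernel-verified Lean document; each statement's English description precedes it below -/
import Mathlib

section
/- Let C and S be defined by C^{-1} = Σ^{-1} + H*Γ^{-1}H and S = HΣH* + Γ, where Σ and Γ are symmetric positive definite matrices on finite-dimensional Euclidean spaces X and Y respectively and H is a linear map from X to Y. Then the Kalman gain K := ΣH*S^{-1} satisfies K = C H* Γ^{-1}, and consequently for any m = C(Σ^{-1}a + H*Γ^{-1}y) one has m = (I - KH)a + Ky. -/
open ContinuousLinearMap RealInnerProductSpace

/-- The Kalman gain `K = Σ H* S⁻¹` (with `S = H Σ H* + Γ`, `C⁻¹ = Σ⁻¹ + H* Γ⁻¹ H`)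
satisfies `K = C H* Γ⁻¹`, and consequently `m = C(Σ⁻¹ a + H* Γ⁻¹ y)` can be written
in Kalman form `m = (I - K H) a + K y`. -/
theorem kalman_gain_identity
    {X Y : Type*} [NormedAddCommGroup X] [InnerProductSpace ℝ X] [FiniteDimensional ℝ X]
    [NormedAddCommGroup Y] [InnerProductSpace ℝ Y] [FiniteDimensional ℝ Y]
    (Sg Sginv C Cinv : X →L[ℝ] X) (Gm Gminv S Sinv : Y →L[ℝ] Y) (H : X →L[ℝ] Y)
    -- symmetry
    (hSgsym : ∀ x x' : X, ⟪Sg x, x'⟫ = ⟪x, Sg x'⟫)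
    (hGmsym : ∀ y y' : Y, ⟪Gm y, y'⟫ = ⟪y, Gm y'⟫)
    -- positive definiteness
    (hSgpos : ∀ x : X, x ≠ 0 → 0 < ⟪x, Sg x⟫)
    (hGmpos : ∀ y : Y, y ≠ 0 → 0 < ⟪y, Gm y⟫)
    -- inverses
    (hSg1 : Sg ∘L Sginv = 1) (hSg2 : Sginv ∘L Sg = 1)
    (hGm1 : Gm ∘L Gminv = 1) (hGm2 : Gminv ∘L Gm = 1)
    (hC1 : C ∘L Cinv = 1) (hC2 : Cinv ∘L C = 1)
    (hS1 : S ∘L Sinv = 1) (hS2 : Sinv ∘L S = 1)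
    -- defining relations
    (hCinv : Cinv = Sginv + (ContinuousLinearMap.adjoint H) ∘L Gminv ∘L H)
    (hSdef : S = H ∘L Sg ∘L (ContinuousLinearMap.adjoint H) + Gm)
    :
    (Sg ∘L (ContinuousLinearMap.adjoint H) ∘L Sinv
      = C ∘L (ContinuousLinearMap.adjoint H) ∘L Gminv) ∧
    (∀ (a : X) (y : Y),
      C (Sginv a + (ContinuousLinearMap.adjoint H) (Gminv y))
        = a - (Sg ∘L (ContinuousLinearMap.adjoint H) ∘L Sinv) (H a)
            + (Sg ∘L (ContinuousLinearMap.adjoint H) ∘L Sinv) y) := by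
  have hSg2' : ∀ x, Sginv (Sg x) = x := fun x => DFunLike.congr_fun hSg2 x
  have hGm2' : ∀ y, Gminv (Gm y) = y := fun y => DFunLike.congr_fun hGm2 y
  have hC1' : ∀ x, C (Cinv x) = x := fun x => DFunLike.congr_fun hC1 x
  have hC2' : ∀ x, Cinv (C x) = x := fun x => DFunLike.congr_fun hC2 x
  have hS1' : ∀ y, S (Sinv y) = y := fun y => DFunLike.congr_fun hS1 y
  have hS2' : ∀ y, Sinv (S y) = y := fun y => DFunLike.congr_fun hS2 y
  have hkey : ∀ y, Cinv (Sg ((ContinuousLinearMap.adjoint H) y))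
      = (ContinuousLinearMap.adjoint H) (Gminv (S y)) := by
    intro y
    rw [hCinv, hSdef]
    simp only [ContinuousLinearMap.add_apply, ContinuousLinearMap.comp_apply, map_add,
      hSg2', hGm2']
    abel
  have hK : ∀ y, (Sg ∘L (ContinuousLinearMap.adjoint H) ∘L Sinv) y
      = (C ∘L (ContinuousLinearMap.adjoint H) ∘L Gminv) y := by
    intro y
    simp only [ContinuousLinearMap.comp_apply]
    have := congrArg C (hkey (Sinv y))
    rw [hC1', hS1'] at this
    exact this
  refine ⟨ContinuousLinearMap.ext hK, fun a y => ?_⟩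
  have hCSginv : C (Sginv a) = a - C ((ContinuousLinearMap.adjoint H) (Gminv (H a))) := by
    have : Sginv a = Cinv a - (ContinuousLinearMap.adjoint H) (Gminv (H a)) := by
      rw [hCinv]; simp [ContinuousLinearMap.add_apply, ContinuousLinearMap.comp_apply]
    rw [this, map_sub, hC1']
  rw [map_add, hCSginv, hK (H a), hK y]
  simp only [ContinuousLinearMap.comp_apply]
end

section
/- Abstract particle-filter consistency by induction: suppose probability measures μ_k satisfy μ_{k+1} = L_{k+1} P μ_k and random probability measures ρ_k^N satisfy ρ_{k+1}^N = L_{k+1} S^N P ρ_k^N with ρ_0^N = μ_0, where P satisfies d(Pμ,Pν) ≤ d(μ,ν), each L_{k+1} satisfies d(L_{k+1}μ, L_{k+1}ν) ≤ λ d(μ,ν) with λ ≥ 1, and d(S^Nν, ν) ≤ N^{-1/2} for all ν. Then d(ρ_K^N, μ_K) ≤ (∑_{k=1}^K λ^k) N^{-1/2} for all K, N ≥ 1. -/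
lemma sum_Icc_pow_succ (lam : ℝ) (K : ℕ) :
    ∑ k ∈ Finset.Icc 1 (K + 1), lam ^ k = lam * (1 + ∑ k ∈ Finset.Icc 1 K, lam ^ k) := by
  induction K with
  | zero => simp
  | succ n ih =>
      rw [Finset.sum_Icc_succ_top (by omega : 1 ≤ n + 1 + 1)]
      rw [Finset.sum_Icc_succ_top (by omega : 1 ≤ n + 1)] at ih ⊢
      linear_combination ih

/-- Abstract particle-filter consistency by induction: if `μ_{k+1} = L_{k+1} P μ_k`,
`ρ_{k+1}^N = L_{k+1} S^N P ρ_k^N`, `ρ_0^N = μ_0`, where `P` is a contraction for `d`,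
each `L_{k+1}` is `λ`-Lipschitz with `λ ≥ 1`, and `d(S^N ν, ν) ≤ N^{-1/2}`, then
`d(ρ_K^N, μ_K) ≤ (∑_{k=1}^K λ^k) N^{-1/2}` for all `K, N ≥ 1`. -/
theorem abstract_particle_filter_consistency
    {M : Type*} (d : M → M → ℝ)
    (hd0 : ∀ a, d a a = 0)
    (htri : ∀ a b c, d a c ≤ d a b + d b c)
    (Pm : M → M) (L : ℕ → M → M) (SN : M → M)
    (lam : ℝ) (hlam : 1 ≤ lam)
    (N : ℕ) (hN : 1 ≤ N)
    (hP : ∀ a b, d (Pm a) (Pm b) ≤ d a b)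
    (hL : ∀ k a b, d (L k a) (L k b) ≤ lam * d a b)
    (hS : ∀ a, d (SN a) a ≤ (N : ℝ) ^ (-(1 : ℝ) / 2))
    (μ ρ : ℕ → M)
    (hμ : ∀ k, μ (k + 1) = L (k + 1) (Pm (μ k)))
    (hρ : ∀ k, ρ (k + 1) = L (k + 1) (SN (Pm (ρ k))))
    (h0 : ρ 0 = μ 0) :
    ∀ K : ℕ, 1 ≤ K →
      d (ρ K) (μ K) ≤ (∑ k ∈ Finset.Icc 1 K, lam ^ k) * (N : ℝ) ^ (-(1 : ℝ) / 2) := by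
  set ε : ℝ := (N : ℝ) ^ (-(1 : ℝ) / 2) with hε
  have hε0 : 0 ≤ ε := Real.rpow_nonneg (Nat.cast_nonneg N) _
  have hlam0 : (0 : ℝ) ≤ lam := le_trans zero_le_one hlam
  have main : ∀ K : ℕ, d (ρ K) (μ K) ≤ (∑ k ∈ Finset.Icc 1 K, lam ^ k) * ε := by
    intro K
    induction K with
    | zero => simp [h0, hd0]
    | succ n ih =>
        have step1 : d (ρ (n + 1)) (μ (n + 1)) ≤ lam * d (SN (Pm (ρ n))) (Pm (μ n)) := by
          rw [hρ n, hμ n]; exact hL _ _ _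
        have step2 : d (SN (Pm (ρ n))) (Pm (μ n)) ≤ ε + d (ρ n) (μ n) := by
          calc d (SN (Pm (ρ n))) (Pm (μ n))
              ≤ d (SN (Pm (ρ n))) (Pm (ρ n)) + d (Pm (ρ n)) (Pm (μ n)) := htri _ _ _
            _ ≤ ε + d (ρ n) (μ n) := add_le_add (hS _) (hP _ _)
        calc d (ρ (n + 1)) (μ (n + 1))
            ≤ lam * (ε + d (ρ n) (μ n)) :=
              step1.trans (mul_le_mul_of_nonneg_left step2 hlam0)
          _ ≤ lam * (ε + (∑ k ∈ Finset.Icc 1 n, lam ^ k) * ε) := by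
              exact mul_le_mul_of_nonneg_left (by linarith) hlam0
          _ = (∑ k ∈ Finset.Icc 1 (n + 1), lam ^ k) * ε := by
              rw [sum_Icc_pow_succ]; ring
  exact fun K _ => main K
end
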